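/- Let v_1,...,v_n ∈ ℤⁿ be linearly independent vectors forming the columns of a matrix B in Hermite normal form, and suppose some diagonal entry B_{jj} ≥ 3. Then for every integer q ≥ 2, setting a = (1/q)·⌊q/2⌋·f_j (where f_j is the j-th standard basis vector), every representative a + u with u ∈ ℤⁿ of the class [a] ∈ (1/q)ℤⁿ/ℤⁿ that satisfies |⟨a + u, v_i⟩| < 1 for all i < j must fail |⟨a + u, v_j⟩| < 1. -/
import Mathlib


/-- If `B` is in Hermite normal form with `B j j ≥ 3`, `q ≥ 2`, and
`a = (1/q)⌊q/2⌋ f_j`, then any integer translate `a + u` satisfying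
`|⟨a + u, v i⟩| < 1` for all `i < j` (columns `v i` of `B`) fails `|⟨a + u, v j⟩| < 1`. -/
theorem stmt5 (n : ℕ) (B : Matrix (Fin n) (Fin n) ℤ)
    (hdet : B.det ≠ 0)
    (htri : ∀ i k : Fin n, k < i → B i k = 0)
    (hnonneg : ∀ i k : Fin n, 0 ≤ B i k)
    (hHNF : ∀ i k : Fin n, i < k → B i k < B k k)
    (j : Fin n) (hj : 3 ≤ B j j)
    (q : ℕ) (hq : 2 ≤ q)
    (a : Fin n → ℝ)
    (hadef : a = fun i => if i = j then ((q / 2 : ℕ) : ℝ) / q else 0) :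
    ∀ u : Fin n → ℤ,
      (∀ i : Fin n, i < j → |∑ i', (a i' + (u i' : ℝ)) * (B i' i : ℝ)| < 1) →
      ¬ (|∑ i', (a i' + (u i' : ℝ)) * (B i' j : ℝ)| < 1) := by
  intro u hu
  -- diagonal entries are positive
  have hBT : B.BlockTriangular id := fun i k h => htri i k h
  have hdetprod : B.det = ∏ i, B i i := Matrix.det_of_upperTriangular hBT
  have hdiag : ∀ i : Fin n, 1 ≤ B i i := by
    intro i
    have hne : B i i ≠ 0 := by
      intro h0
      apply hdet
      rw [hdetprod]
      exact Finset.prod_eq_zero (Finset.mem_univ i) h0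
    have := hnonneg i i
    omega
  -- u i = 0 for all i < j
  have key : ∀ m : ℕ, ∀ hm : m < n, (⟨m, hm⟩ : Fin n) < j → u ⟨m, hm⟩ = 0 := by
    intro m
    induction m using Nat.strong_induction_on with
    | _ m ih =>
      intro hm hlt
      set i : Fin n := ⟨m, hm⟩ with hi
      have hsum : (∑ i', (a i' + (u i' : ℝ)) * (B i' i : ℝ))
          = ((∑ i', u i' * B i' i : ℤ) : ℝ) := by
        push_cast
        apply Finset.sum_congr rfl
        intro i' _
        rcases eq_or_ne i' j with h | h
        · subst h
          have : B i' i = 0 := htri i' i hlt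
          simp [this]
        · simp [hadef, h]
      have h1 := hu i hlt
      rw [hsum] at h1
      have habs : |(∑ i', u i' * B i' i : ℤ)| < 1 := by exact_mod_cast h1
      have hz : (∑ i', u i' * B i' i : ℤ) = 0 := by
        have := abs_lt.mp habs
        omega
      have hsingle : (∑ i', u i' * B i' i : ℤ) = u i * B i i := by
        apply Finset.sum_eq_single
        · intro i' _ hne
          rcases lt_or_gt_of_ne hne with h | h
          · have h' : (i' : ℕ) < m := h
            have hz' := ih i'.1 h' i'.isLt (by simpa using lt_trans h hlt)
            simp only [Fin.eta] at hz'
            simp [hz']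
          · have : B i' i = 0 := htri i' i h
            simp [this]
        · intro h; exact absurd (Finset.mem_univ i) h
      rw [hsingle] at hz
      have : u i = 0 ∨ B i i = 0 := mul_eq_zero.mp hz
      have := hdiag i
      omega
  have key' : ∀ i : Fin n, i < j → u i = 0 := fun i h => key i.1 i.2 (by simpa using h)
  -- evaluate the j-th inner product
  set α : ℝ := ((q / 2 : ℕ) : ℝ) / q with hα
  have hsumj : (∑ i', (a i' + (u i' : ℝ)) * (B i' j : ℝ)) = (α + u j) * (B j j : ℝ) := by
    rw [show (α + (u j : ℝ)) * (B j j : ℝ) = (a j + (u j : ℝ)) * (B j j : ℝ) by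
      simp [hadef, hα]]
    apply Finset.sum_eq_single
    · intro i' _ hne
      rcases lt_or_gt_of_ne hne with h | h
      · have h1 : u i' = 0 := key' i' h
        have h2 : a i' = 0 := by simp [hadef, hne]
        simp [h1, h2]
      · have : B i' j = 0 := htri i' j h
        simp [this]
    · intro h; exact absurd (Finset.mem_univ j) h
  rw [hsumj]
  -- bounds on α
  have hqpos : (0 : ℝ) < q := by positivity
  have hub : α ≤ 1 / 2 := by
    rw [hα, div_le_div_iff₀ hqpos (by norm_num)]
    have : 2 * (q / 2) ≤ q := by omega
    calc ((q / 2 : ℕ) : ℝ) * 2 = ((2 * (q / 2) : ℕ) : ℝ) := by push_cast; ring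
      _ ≤ ((q : ℕ) : ℝ) := by exact_mod_cast Nat.cast_le.mpr this
      _ = 1 * q := by ring
  have hlb : 1 / 3 ≤ α := by
    rw [hα, div_le_div_iff₀ (by norm_num) hqpos]
    have : q ≤ 3 * (q / 2) := by omega
    calc (1 : ℝ) * q = ((q : ℕ) : ℝ) := by ring
      _ ≤ ((3 * (q / 2) : ℕ) : ℝ) := by exact_mod_cast Nat.cast_le.mpr this
      _ = ((q / 2 : ℕ) : ℝ) * 3 := by push_cast; ring
  -- |α + u j| ≥ 1/3
  have habs : (1 / 3 : ℝ) ≤ |α + (u j : ℝ)| := by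
    rcases le_or_gt 0 (u j) with h | h
    · have : (0 : ℝ) ≤ (u j : ℝ) := by exact_mod_cast h
      rw [abs_of_nonneg (by linarith)]
      linarith
    · have h2 : u j ≤ -1 := by omega
      have h' : (u j : ℝ) ≤ -1 := by exact_mod_cast h2
      rw [abs_of_nonpos (by linarith)]
      linarith
  have hBjj : (3 : ℝ) ≤ (B j j : ℝ) := by exact_mod_cast hj
  intro hcon
  rw [abs_mul] at hcon
  have : (1 : ℝ) ≤ |α + (u j : ℝ)| * |(B j j : ℝ)| := by
    have hB0 : (0 : ℝ) ≤ (B j j : ℝ) := by linarith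
    rw [abs_of_nonneg hB0]
    calc (1 : ℝ) = (1/3) * 3 := by norm_num
      _ ≤ |α + (u j : ℝ)| * (B j j : ℝ) :=
        mul_le_mul habs hBjj (by norm_num) (abs_nonneg _)
  linarith
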